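/- Let d ≥ 1 and let (g_n) be a sequence in GL(d,ℝ). Then there exist a strictly increasing map φ : ℕ → ℕ and a function p : ℙ^{d−1}(ℝ) → ℙ^{d−1}(ℝ) such that for every nonzero v ∈ ℝ^d the sequence [g_{φ(k)} v] converges to p([v]) in ℙ^{d−1}(ℝ) as k → ∞. (This expresses that the action of GL(d,ℝ) on ℙ^{d−1}(ℝ) is tame: every sequence of induced projective maps has a pointwise convergent subsequence.) -/

import Mathlib

open Filter Matrix Topology

/-- Real projective space `ℙ^{d-1}(ℝ)` carries the quotient topology from `ℝ^d ∖ {0}`. -/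
noncomputable instance projectivizationTopology (d : ℕ) :
    TopologicalSpace (Projectivization ℝ (Fin d → ℝ)) :=
  instTopologicalSpaceQuotient

set_option maxHeartbeats 1000000
set_option synthInstance.maxHeartbeats 400000

/-- continuity of `mk` at nonzero limits -/
lemma mk_tendsto {d : ℕ} {w : ℕ → Fin d → ℝ} {l : Fin d → ℝ}
    (hw : ∀ k, w k ≠ 0) (hl : l ≠ 0) (h : Tendsto w atTop (𝓝 l)) :
    Tendsto (fun k => Projectivization.mk ℝ (w k) (hw k)) atTop
      (𝓝 (Projectivization.mk ℝ l hl)) := by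
  have hc : Continuous (Projectivization.mk' ℝ (V := Fin d → ℝ)) := by
    exact continuous_quotient_mk'
  have h' : Tendsto (fun k => (⟨w k, hw k⟩ : {v : Fin d → ℝ // v ≠ 0})) atTop
      (𝓝 ⟨l, hl⟩) := by
    rw [tendsto_subtype_rng]; exact h
  exact (hc.tendsto _).comp h'

set_option maxHeartbeats 1000000 in
set_option synthInstance.maxHeartbeats 400000 in
lemma key (d : ℕ) [Nonempty (Projectivization ℝ (Fin d → ℝ))] (n : ℕ) :
    ∀ (W : Submodule ℝ (Fin d → ℝ)), Module.finrank ℝ W ≤ n →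
    ∀ (A : ℕ → (Fin d → ℝ) →L[ℝ] (Fin d → ℝ)),
    (∀ k, ∀ v ∈ W, v ≠ 0 → A k v ≠ 0) →
    ∃ φ : ℕ → ℕ, StrictMono φ ∧
      ∃ p : (Fin d → ℝ) → Projectivization ℝ (Fin d → ℝ),
        ∀ v (hv : v ∈ W) (hv0 : v ≠ 0) (h : ∀ k, A (φ k) v ≠ 0),
          Tendsto (fun k => Projectivization.mk ℝ (A (φ k) v) (h k)) atTop
            (𝓝 (p v)) := by
  induction n using Nat.strong_induction_on with
  | _ n IH =>
  intro W hWn A hA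
  by_cases hWbot : W = ⊥
  · refine ⟨id, strictMono_id, fun _ => Classical.arbitrary _, ?_⟩
    intro v hv hv0 h
    rw [hWbot, Submodule.mem_bot] at hv
    exact absurd hv hv0
  -- W ≠ ⊥ : pick a nonzero vector of W
  obtain ⟨v0, hv0ne⟩ := Submodule.nonzero_mem_of_bot_lt (bot_lt_iff_ne_bot.2 hWbot)
  have hv0' : (v0 : Fin d → ℝ) ≠ 0 := fun h => hv0ne (Subtype.ext h)
  set B : ℕ → ↥W →L[ℝ] (Fin d → ℝ) := fun k => (A k).comp (Submodule.subtypeL W)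
    with hBdef
  have hB0 : ∀ k, B k ≠ 0 := by
    intro k hk
    apply hA k v0 v0.2 hv0'
    have := congrArg (fun f => f v0) hk
    simpa [hBdef] using this
  have hc : ∀ k, ‖B k‖ ≠ 0 := fun k h => hB0 k ((ContinuousLinearMap.opNorm_zero_iff (B k)).1 h)
  set u : ℕ → ↥W →L[ℝ] (Fin d → ℝ) := fun k => (‖B k‖)⁻¹ • B k with hudef
  have hu : ∀ k, u k ∈ Metric.sphere (0 : ↥W →L[ℝ] (Fin d → ℝ)) 1 := by
    intro k
    have hd : dist (u k) (0 : ↥W →L[ℝ] (Fin d → ℝ)) = ‖u k‖ :=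
      @dist_zero_right (↥W →L[ℝ] (Fin d → ℝ)) _ (u k)
    rw [Metric.mem_sphere, hd]
    show ‖(‖B k‖)⁻¹ • B k‖ = 1
    haveI := NormedSpace.toNormSMulClass (𝕜 := ℝ) (E := ↥W →L[ℝ] (Fin d → ℝ))
    calc ‖(‖B k‖)⁻¹ • B k‖ = ‖(‖B k‖)⁻¹‖ * ‖B k‖ := by exact norm_smul (‖B k‖)⁻¹ (B k)
    _ = 1 := by
        rw [norm_inv, Real.norm_eq_abs, abs_of_nonneg (norm_nonneg (B k))]
        exact inv_mul_cancel₀ (hc k)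
  haveI : FiniteDimensional ℝ (↥W →L[ℝ] (Fin d → ℝ)) :=
    LinearEquiv.finiteDimensional
      (LinearMap.toContinuousLinearMap :
        (↥W →ₗ[ℝ] (Fin d → ℝ)) ≃ₗ[ℝ] (↥W →L[ℝ] (Fin d → ℝ)))
  haveI : ProperSpace (↥W →L[ℝ] (Fin d → ℝ)) := FiniteDimensional.proper_real (↥W →L[ℝ] (Fin d → ℝ))
  obtain ⟨Binf, hBinfmem, φ, hφ, hconv⟩ :=
    (isCompact_sphere (0 : ↥W →L[ℝ] (Fin d → ℝ)) 1).tendsto_subseq hu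
  have hBinf : Binf ≠ 0 := by
    intro h
    rw [h] at hBinfmem
    simp at hBinfmem
  set W' : Submodule ℝ (Fin d → ℝ) := (LinearMap.ker (Binf : ↥W →ₗ[ℝ] (Fin d → ℝ))).map W.subtype with hW'def
  have hW'W : W' ≤ W := Submodule.map_subtype_le _ _
  have hker : LinearMap.ker (Binf : ↥W →ₗ[ℝ] (Fin d → ℝ)) ≠ ⊤ := by
    intro h
    apply hBinf
    apply ContinuousLinearMap.coe_injective
    rw [ContinuousLinearMap.coe_zero]
    exact LinearMap.ker_eq_top.1 h
  have hrank : Module.finrank ℝ W' < n := by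
    have h1 : Module.finrank ℝ W' = Module.finrank ℝ (LinearMap.ker (Binf : ↥W →ₗ[ℝ] (Fin d → ℝ))) :=
      Submodule.finrank_map_subtype_eq W _
    have h2 : Module.finrank ℝ (LinearMap.ker (Binf : ↥W →ₗ[ℝ] (Fin d → ℝ))) < Module.finrank ℝ W :=
      Submodule.finrank_lt hker
    omega
  obtain ⟨ψ, hψ, p', hp'⟩ := IH (Module.finrank ℝ W') hrank W' le_rfl
      (fun k => A (φ k)) (fun k v hv hv0 => hA (φ k) v (hW'W hv) hv0)
  classical
  refine ⟨φ ∘ ψ, hφ.comp hψ, fun v =>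
    if h : v ∈ W' then p' v
    else if hw : v ∈ W then
      (if hb : Binf ⟨v, hw⟩ ≠ 0 then Projectivization.mk ℝ (Binf ⟨v, hw⟩) hb
       else Classical.arbitrary _)
    else Classical.arbitrary _, ?_⟩
  intro v hv hv0 h
  by_cases hvW' : v ∈ W'
  · simp only [dif_pos hvW']
    exact hp' v hvW' hv0 h
  · have hb : Binf ⟨v, hv⟩ ≠ 0 := by
      intro hbz
      exact hvW' ⟨⟨v, hv⟩, LinearMap.mem_ker.2 hbz, rfl⟩
    simp only [dif_neg hvW', dif_pos hv, dif_pos hb]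
    have hpt : Tendsto (fun k => u (φ (ψ k)) ⟨v, hv⟩) atTop (𝓝 (Binf ⟨v, hv⟩)) := by
      have hev : Continuous fun f : ↥W →L[ℝ] (Fin d → ℝ) => f ⟨v, hv⟩ :=
        (ContinuousLinearMap.apply ℝ (Fin d → ℝ) (⟨v, hv⟩ : W)).continuous
      exact (hev.tendsto _).comp (hconv.comp (hψ.tendsto_atTop))
    have hne : ∀ k, u (φ (ψ k)) ⟨v, hv⟩ ≠ 0 := by
      intro k
      have : u (φ (ψ k)) ⟨v, hv⟩ = (‖B (φ (ψ k))‖)⁻¹ • (A (φ (ψ k)) v) := by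
        simp [hudef, hBdef]
      rw [this]
      exact smul_ne_zero (inv_ne_zero (hc _)) (h k)
    have hT := mk_tendsto hne hb hpt
    refine hT.congr ?_
    intro k
    have huv : u (φ (ψ k)) ⟨v, hv⟩ = (‖B (φ (ψ k))‖)⁻¹ • (A (φ (ψ k)) v) := by
      simp [hudef, hBdef]
    rw [Projectivization.mk_eq_mk_iff]
    exact ⟨Units.mk0 (‖B (φ (ψ k))‖)⁻¹ (inv_ne_zero (hc _)), (huv ▸ rfl)⟩

/-- The action of `GL(d,ℝ)` on `ℙ^{d-1}(ℝ)` is tame: every sequence `(g_n)` in `GL(d,ℝ)`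
admits a subsequence `g_{φ(k)}` whose induced projective maps converge pointwise to a map
`p : ℙ^{d-1}(ℝ) → ℙ^{d-1}(ℝ)`. -/
theorem tame_projective_action (d : ℕ) (hd : 1 ≤ d)
    (g : ℕ → Matrix.GeneralLinearGroup (Fin d) ℝ) :
    ∃ φ : ℕ → ℕ, StrictMono φ ∧
      ∃ p : Projectivization ℝ (Fin d → ℝ) → Projectivization ℝ (Fin d → ℝ),
        ∀ (v : Fin d → ℝ) (hv : v ≠ 0),
          ∃ hgv : ∀ k : ℕ, ((g (φ k) : Matrix (Fin d) (Fin d) ℝ)) *ᵥ v ≠ 0,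
            Tendsto
              (fun k : ℕ =>
                Projectivization.mk ℝ (((g (φ k) : Matrix (Fin d) (Fin d) ℝ)) *ᵥ v) (hgv k))
              atTop (𝓝 (p (Projectivization.mk ℝ v hv))) := by
  haveI : Nonempty (Fin d) := ⟨⟨0, hd⟩⟩
  haveI : Nontrivial (Fin d → ℝ) := inferInstance
  set A : ℕ → (Fin d → ℝ) →L[ℝ] (Fin d → ℝ) :=
    fun k => LinearMap.toContinuousLinearMap
      (Matrix.mulVecLin ((g k : Matrix (Fin d) (Fin d) ℝ))) with hAdef
  have hAapp : ∀ k v, A k v = ((g k : Matrix (Fin d) (Fin d) ℝ)) *ᵥ v := fun k v => rfl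
  have hmul : ∀ k (v : Fin d → ℝ), v ≠ 0 →
      ((g k : Matrix (Fin d) (Fin d) ℝ)) *ᵥ v ≠ 0 := by
    intro k v hv h0
    apply hv
    have h1 : ((↑(g k)⁻¹ : Matrix (Fin d) (Fin d) ℝ)) *ᵥ
        (((g k : Matrix (Fin d) (Fin d) ℝ)) *ᵥ v) = v := by
      rw [Matrix.mulVec_mulVec]
      have : (↑(g k)⁻¹ : Matrix (Fin d) (Fin d) ℝ) * (g k : Matrix (Fin d) (Fin d) ℝ)
          = 1 := (g k).inv_mul
      rw [this, Matrix.one_mulVec]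
    rw [← h1, h0, Matrix.mulVec_zero]
  have hA : ∀ k, ∀ v ∈ (⊤ : Submodule ℝ (Fin d → ℝ)), v ≠ 0 → A k v ≠ 0 := by
    intro k v _ hv
    rw [hAapp]
    exact hmul k v hv
  have hrk : Module.finrank ℝ (⊤ : Submodule ℝ (Fin d → ℝ)) ≤ d := by
    rw [finrank_top]
    simp [Module.finrank_fin_fun]
  obtain ⟨φ, hφ, p0, hp0⟩ := key d d ⊤ hrk A hA
  refine ⟨φ, hφ, fun x => p0 x.rep, ?_⟩
  intro v hv
  refine ⟨fun k => hmul (φ k) v hv, ?_⟩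
  set x := Projectivization.mk ℝ v hv with hx
  have hr0 : x.rep ≠ 0 := x.rep_nonzero
  obtain ⟨a, ha⟩ := Projectivization.exists_smul_eq_mk_rep ℝ v hv
  have hrmem : x.rep ∈ (⊤ : Submodule ℝ (Fin d → ℝ)) := trivial
  have hner : ∀ k, A (φ k) x.rep ≠ 0 := by
    intro k
    rw [hAapp]
    exact hmul (φ k) x.rep hr0
  have hT := hp0 x.rep hrmem hr0 hner
  refine hT.congr ?_
  intro k
  rw [Projectivization.mk_eq_mk_iff]
  refine ⟨a, ?_⟩
  have : A (φ k) x.rep = a • (((g (φ k) : Matrix (Fin d) (Fin d) ℝ)) *ᵥ v) := by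
    rw [← ha, hAapp]
    rw [Matrix.mulVec_smul]
  rw [hAapp] at this ⊢
  exact this.symm
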